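/- Let A be a symmetric implication zroupoid such that A satisfies 0 → x = x → x for all x. Then A satisfies both: (1) 0 → (x → x) = x → x for all x, and (2) 0 → x' = 0 → x for all x. -/
import Mathlib


/-- A symmetric I-zroupoid satisfying 0 → x = x → x also satisfies
0 → (x → x) = x → x and 0 → x' = 0 → x. -/
theorem stmt_1 {A : Type*} (f : A → A → A) (z : A)
    (hI : ∀ x y w : A, f (f x y) w = f (f (f (f w z) x) (f (f y w) z)) z)
    (hI0 : f (f z z) z = z)
    (hinv : ∀ x : A, f (f x z) z = x)
    (hsym : ∀ x y : A, f (f x (f y z)) z = f (f y (f x z)) z)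
    (hyp : ∀ x : A, f z x = f x x) :
    (∀ x : A, f z (f x x) = f x x) ∧ (∀ x : A, f z (f x z) = f z x) := by
  constructor
  · intro x
    calc f z (f x x)
        = f (f (f z (f x x)) z) z := (hinv _).symm
      _ = f (f (f (f x x) (f x x)) z) z := by rw [hyp]
      _ = f (f (f (f x x) (f (f (f x x) z) z)) z) z := by rw [hinv (f x x)]
      _ = f (f (f (f (f x x) z) (f (f x x) z)) z) z := by rw [hsym]
      _ = f (f (f z (f (f x x) z)) z) z := by rw [← hyp (f (f x x) z)]
      _ = f (f (f (f x x) (f z z)) z) z := by rw [hsym z (f x x)]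
      _ = f (f x x) (f z z) := hinv _
      _ = f (f (f (f (f z z) z) x) (f (f x (f z z)) z)) z := hI x x (f z z)
      _ = f (f (f z x) (f (f x (f z z)) z)) z := by rw [hI0]
      _ = f (f (f z x) (f (f z (f x z)) z)) z := by rw [hsym x z]
      _ = f (f (f z x) (f (f (f x z) (f x z)) z)) z := by rw [hyp (f x z)]
      _ = f (f (f (f x z) (f x z)) (f (f z x) z)) z := by
            rw [hsym (f z x) (f (f x z) (f x z))]
      _ = f (f (f x z) z) x := (hI (f x z) z x).symm
      _ = f x x := by rw [hinv]
  · intro x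
    have h1 : f (f (f x z) (f x z)) z = f (f x x) z := by
      have := hsym x (f x z)
      rw [hinv] at this; exact this.symm
    have h2 : f (f x z) (f x z) = f x x := by
      calc f (f x z) (f x z)
          = f (f (f (f x z) (f x z)) z) z := (hinv _).symm
        _ = f (f (f x x) z) z := by rw [h1]
        _ = f x x := hinv _
    rw [hyp (f x z), h2, ← hyp x]
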